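/- Let n ≥ 1, let M be an n×n real symmetric positive definite matrix, and let e ∈ ℝ^n. Then for every symmetric positive semidefinite matrix Γ ∈ ℝ^{n×n}, (eᵀ M^{-1} e) · trace(Γ M) ≥ eᵀ Γ e, and equality holds for Γ = M^{-1} e eᵀ M^{-1}. Consequently, if e ≠ 0 then eᵀ M^{-1} e = 1 / min{ trace(Γ M) : Γ symmetric positive semidefinite with eᵀ Γ e = 1 }. -/

import Mathlib

open Matrix

theorem matrix_fractional_lower_bound (n : ℕ) (hn : 1 ≤ n)
    (M : Matrix (Fin n) (Fin n) ℝ) (hM : M.PosDef) (e : Fin n → ℝ) :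
    (∀ Γ : Matrix (Fin n) (Fin n) ℝ, Γ.PosSemidef →
      dotProduct e (M⁻¹.mulVec e) * (Γ * M).trace ≥
        dotProduct e (Γ.mulVec e)) ∧
    (dotProduct e (M⁻¹.mulVec e) *
        ((Matrix.vecMulVec (M⁻¹.mulVec e) (Matrix.vecMul e M⁻¹)) * M).trace =
      dotProduct e
        ((Matrix.vecMulVec (M⁻¹.mulVec e) (Matrix.vecMul e M⁻¹)).mulVec e)) ∧
    (e ≠ 0 →
      dotProduct e (M⁻¹.mulVec e) =
        1 / sInf { t : ℝ | ∃ Γ : Matrix (Fin n) (Fin n) ℝ,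
          Γ.PosSemidef ∧ dotProduct e (Γ.mulVec e) = 1 ∧ t = (Γ * M).trace }) := by
  classical
  have hMt : Mᵀ = M := by
    rw [← conjTranspose_eq_transpose_of_trivial]; exact hM.1
  have hdet : IsUnit M.det := hM.det_pos.ne'.isUnit
  have hMinv' : M * M⁻¹ = 1 := mul_nonsing_inv M hdet
  have hMit : M⁻¹ᵀ = M⁻¹ := by rw [transpose_nonsing_inv, hMt]
  set α := dotProduct e (M⁻¹.mulVec e) with hαdef
  set w := M⁻¹.mulVec e with hwdef
  have hw : Matrix.vecMul e M⁻¹ = w := by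
    rw [hwdef, ← hMit, vecMul_transpose, hMit]
  have hwM : Matrix.vecMul w M = e := by
    rw [← hMt, vecMul_transpose]
    show M.mulVec (M⁻¹.mulVec e) = e
    rw [mulVec_mulVec, hMinv', one_mulVec]
  -- square root of M
  obtain ⟨S, hSsa, -, hSS'⟩ := open scoped MatrixOrder in
    CFC.exists_sqrt_of_isSelfAdjoint_of_quasispectrumRestricts (a := M) hM.posSemidef.isHermitian
      (QuasispectrumRestricts.nnreal_of_nonneg hM.posSemidef.nonneg)
  have hSt : Sᵀ = S := by
    rw [← conjTranspose_eq_transpose_of_trivial]; exact hSsa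
  have hSS : S * S = M := hSS'
  have key : ∀ x y : Fin n → ℝ,
      dotProduct (S.mulVec x) y = dotProduct x (S.mulVec y) := by
    intro x y
    rw [dotProduct_comm, dotProduct_mulVec, ← mulVec_transpose, hSt, dotProduct_comm]
  have hSSmul : ∀ x : Fin n → ℝ, S.mulVec (S.mulVec x) = M.mulVec x := by
    intro x; rw [mulVec_mulVec, hSS]
  -- Cauchy-Schwarz
  have hCS : ∀ a : Fin n → ℝ,
      (dotProduct a e) ^ 2 ≤ dotProduct a (M.mulVec a) * α := by
    intro a
    have huv : dotProduct (S.mulVec a) (S.mulVec w) = dotProduct a e := by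
      rw [key, hSSmul, hwdef, mulVec_mulVec, hMinv', one_mulVec]
    have huu : dotProduct (S.mulVec a) (S.mulVec a) =
        dotProduct a (M.mulVec a) := by
      rw [key, hSSmul]
    have hvv : dotProduct (S.mulVec w) (S.mulVec w) = α := by
      rw [key, hSSmul, hwdef, mulVec_mulVec, hMinv', one_mulVec, dotProduct_comm]
    have := Finset.sum_mul_sq_le_sq_mul_sq Finset.univ (S.mulVec a) (S.mulVec w)
    rw [← huv, ← huu, ← hvv]
    simpa [dotProduct, sq] using this
  -- Part 1
  have part1 : ∀ Γ : Matrix (Fin n) (Fin n) ℝ, Γ.PosSemidef →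
      dotProduct e (Γ.mulVec e) ≤ α * (Γ * M).trace := by
    intro Γ hΓ
    obtain ⟨B, rfl⟩ : ∃ B : Matrix (Fin n) (Fin n) ℝ, Γ = Bᴴ * B := by
      obtain ⟨B, hB, -, hBB⟩ := open scoped MatrixOrder in
        CFC.exists_sqrt_of_isSelfAdjoint_of_quasispectrumRestricts (a := Γ) hΓ.isHermitian
          (QuasispectrumRestricts.nnreal_of_nonneg hΓ.nonneg)
      refine ⟨B, ?_⟩
      rw [← hBB]
      congr 1
      exact hB.symm
    have hq : dotProduct e ((Bᴴ * B).mulVec e) =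
        ∑ i, (dotProduct (B i) e) ^ 2 := by
      rw [conjTranspose_eq_transpose_of_trivial, ← mulVec_mulVec, dotProduct_mulVec,
        vecMul_transpose]
      simp [dotProduct, Matrix.mulVec, sq, mul_comm]
    have htr : ((Bᴴ * B) * M).trace = ∑ i, dotProduct (B i) (M.mulVec (B i)) := by
      rw [conjTranspose_eq_transpose_of_trivial, mul_assoc, trace_mul_comm]
      simp only [Matrix.trace, Matrix.diag_apply, Matrix.mul_apply, Matrix.transpose_apply,
        Matrix.mulVec, dotProduct, Finset.mul_sum, Finset.sum_mul]
      refine Finset.sum_congr rfl fun i _ => ?_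
      rw [Finset.sum_comm]
      exact Finset.sum_congr rfl fun j _ => Finset.sum_congr rfl fun k _ => by ring
    rw [hq, htr, Finset.mul_sum]
    refine Finset.sum_le_sum fun i _ => ?_
    calc (dotProduct (B i) e) ^ 2
        ≤ dotProduct (B i) (M.mulVec (B i)) * α := hCS (B i)
      _ = α * dotProduct (B i) (M.mulVec (B i)) := mul_comm _ _
  -- trace and quadratic form of the rank-one matrix
  have htr0 : ((Matrix.vecMulVec w (Matrix.vecMul e M⁻¹)) * M).trace = α := by
    rw [hw, vecMulVec_eq (ι := Unit), Matrix.mul_assoc, ← replicateRow_vecMul, trace_replicateCol_mul_replicateRow, hwM,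
      dotProduct_comm]
  have hq0 : dotProduct e ((Matrix.vecMulVec w (Matrix.vecMul e M⁻¹)).mulVec e) =
      α * α := by
    rw [hw]
    have hmv : (Matrix.vecMulVec w w).mulVec e = (dotProduct w e) • w := by
      ext i
      simp [Matrix.vecMulVec, Matrix.mulVec, dotProduct, Finset.mul_sum,
        Finset.sum_mul]
      exact Finset.sum_congr rfl fun j _ => by ring
    rw [hmv, dotProduct_smul, smul_eq_mul, dotProduct_comm w e]
  refine ⟨fun Γ hΓ => part1 Γ hΓ, by rw [htr0, hq0], fun he => ?_⟩
  -- Part 3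
  have hα_pos : 0 < α := by
    have := (hM.inv).dotProduct_mulVec_pos he
    simpa [hαdef] using this
  set T := { t : ℝ | ∃ Γ : Matrix (Fin n) (Fin n) ℝ,
      Γ.PosSemidef ∧ dotProduct e (Γ.mulVec e) = 1 ∧ t = (Γ * M).trace } with hT
  -- the optimal Γ
  have hpsd0 : (Matrix.vecMulVec w w).PosSemidef := by
    have := posSemidef_conjTranspose_mul_self (Matrix.replicateRow Unit w)
    have hrc : (Matrix.replicateRow Unit w)ᴴ * Matrix.replicateRow Unit w = Matrix.vecMulVec w w := by
      rw [vecMulVec_eq (ι := Unit)]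
      congr 1
    rwa [hrc] at this
  have hΓ0psd : (((α * α)⁻¹) • Matrix.vecMulVec w w).PosSemidef := by
    refine .of_dotProduct_mulVec_nonneg ?_ fun x => ?_
    · have h1 := hpsd0.1
      rw [Matrix.IsHermitian] at h1 ⊢
      rw [conjTranspose_smul, h1]
      simp
    · have h2 := hpsd0.dotProduct_mulVec_nonneg x
      rw [smul_mulVec, dotProduct_smul, smul_eq_mul]
      exact mul_nonneg (by positivity) h2
  have hq0' : dotProduct e ((Matrix.vecMulVec w w).mulVec e) = α * α := by
    have := hq0; rwa [hw] at this
  have htr0' : ((Matrix.vecMulVec w w) * M).trace = α := by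
    have := htr0; rwa [hw] at this
  have hmemT : α⁻¹ ∈ T := by
    refine ⟨((α * α)⁻¹) • Matrix.vecMulVec w w, hΓ0psd, ?_, ?_⟩
    · rw [smul_mulVec, dotProduct_smul, smul_eq_mul, hq0']
      field_simp
    · rw [smul_mul_assoc, trace_smul, htr0', smul_eq_mul]
      field_simp
  have hlb : ∀ t ∈ T, α⁻¹ ≤ t := by
    rintro t ⟨Γ, hΓ, hΓ1, rfl⟩
    have h1 : (1 : ℝ) ≤ α * (Γ * M).trace := by
      rw [← hΓ1]; exact part1 Γ hΓ
    rw [inv_le_iff_one_le_mul₀ hα_pos]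
    linarith [h1]
  have hinf : sInf T = α⁻¹ :=
    le_antisymm (csInf_le ⟨α⁻¹, hlb⟩ hmemT) (le_csInf ⟨α⁻¹, hmemT⟩ hlb)
  rw [hinf, one_div, inv_inv]
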